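/- Let S be a finite strategy set with |S| ≥ 2, let M : S × S → ℝ be skew-symmetric (M(s,t) = −M(t,s)), and suppose S is partitioned into k nonempty, pairwise disjoint layers L_1, …, L_k such that M(s_1, s_2) > 0 for all s_1 ∈ L_i, s_2 ∈ L_j whenever i < j. Define the transitive strength of a layer L_i as the average win-rate (1/|L_i|) ∑_{s ∈ L_i} TS(s), where TS(s) = (1/(|S|−1)) ∑_{z ∈ S} 1[M(s,z) > 0]. Then the transitive strengths of the layers are strictly decreasing: for all i < j, (1/|L_i|) ∑_{s ∈ L_i} TS(s) > (1/|L_j|) ∑_{t ∈ L_j} TS(t). -/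
import Mathlib


/-- The win-rate of strategy `s`: the fraction of strategies `z` in the whole strategy
space that `s` beats (`M s z > 0`), normalized by `|S| - 1`. -/
noncomputable def winRate {S : Type*} [Fintype S] (M : S → S → ℝ) (s : S) : ℝ :=
  (1 / ((Fintype.card S : ℝ) - 1)) * ∑ z : S, (if 0 < M s z then (1 : ℝ) else 0)

/-- The transitive strength of a layer `L`: the average win-rate of the strategies in `L`. -/
noncomputable def layerStrength {S : Type*} [Fintype S] (M : S → S → ℝ) (L : Finset S) : ℝ :=
  (1 / (L.card : ℝ)) * ∑ s ∈ L, winRate M s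

/-- Let `S` be a finite strategy set with `|S| ≥ 2`, `M` skew-symmetric, and
`L 1, …, L k` a partition of `S` into nonempty pairwise-disjoint layers where every strategy in
an earlier layer beats every strategy in any later layer. Then the transitive strengths
(average win-rates) of the layers are strictly decreasing in the layer index. -/
theorem layerStrength_strict_anti_of_layers
    {S : Type*} [Fintype S] (hcard : 2 ≤ Fintype.card S)
    (M : S → S → ℝ) (hskew : ∀ s t, M s t = -M t s)
    (k : ℕ) (L : Fin k → Finset S)
    (hne : ∀ i, (L i).Nonempty)
    (hdisj : ∀ i j, i ≠ j → Disjoint (L i) (L j))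
    (hcover : ∀ s : S, ∃ i, s ∈ L i)
    (hbeat : ∀ i j : Fin k, i < j → ∀ s₁ ∈ L i, ∀ s₂ ∈ L j, 0 < M s₁ s₂) :
    ∀ i j : Fin k, i < j → layerStrength M (L j) < layerStrength M (L i) := by
  classical
  intro i j hij
  have hn0 : (0:ℝ) < (Fintype.card S : ℝ) - 1 := by
    have : (2:ℝ) ≤ (Fintype.card S : ℝ) := by exact_mod_cast hcard
    linarith
  set c : ℝ := 1 / ((Fintype.card S : ℝ) - 1) with hcdef
  have hc : 0 < c := by positivity
  -- win set of a strategy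
  set W : S → Finset S := fun s => Finset.univ.filter (fun z => 0 < M s z) with hW
  have hWR : ∀ s, winRate M s = c * (W s).card := by
    intro s
    simp [winRate, Finset.sum_boole, hW, hcdef]
  -- strategies in layers strictly after i
  set T : Fin k → Finset S :=
    fun i => Finset.univ.filter (fun z => ∃ m, i < m ∧ z ∈ L m) with hT
  -- every s ∈ L i beats everything in T i
  have hlow : ∀ s ∈ L i, T i ⊆ W s := by
    intro s hs z hz
    simp only [hT, Finset.mem_filter] at hz
    obtain ⟨-, m, him, hzm⟩ := hz
    simp only [hW, Finset.mem_filter]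
    exact ⟨Finset.mem_univ _, hbeat i m him s hs z hzm⟩
  -- every t ∈ L j wins only within (L j).erase t ∪ T j
  have hup : ∀ t ∈ L j, W t ⊆ (L j).erase t ∪ T j := by
    intro t ht z hz
    simp only [hW, Finset.mem_filter] at hz
    obtain ⟨-, hMz⟩ := hz
    obtain ⟨m, hzm⟩ := hcover z
    rcases lt_trichotomy m j with h | h | h
    · exfalso
      have h1 : 0 < M z t := hbeat m j h z hzm t ht
      have h2 : M t z = -M z t := hskew t z
      linarith
    · subst h
      have hzt : z ≠ t := by
        intro he; subst he
        have : M z z = -M z z := hskew z z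
        linarith
      exact Finset.mem_union_left _ (Finset.mem_erase.mpr ⟨hzt, hzm⟩)
    · refine Finset.mem_union_right _ ?_
      simp only [hT, Finset.mem_filter]
      exact ⟨Finset.mem_univ _, m, h, hzm⟩
  -- T i contains L j ∪ T j, disjointly
  have hLjTj : Disjoint (L j) (T j) := by
    rw [Finset.disjoint_left]
    intro z hz hz'
    simp only [hT, Finset.mem_filter] at hz'
    obtain ⟨-, m, hjm, hzm⟩ := hz'
    exact (Finset.disjoint_left.mp (hdisj j m (ne_of_lt hjm)) hz) hzm
  have hsub : L j ∪ T j ⊆ T i := by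
    intro z hz
    rcases Finset.mem_union.mp hz with h | h
    · simp only [hT, Finset.mem_filter]
      exact ⟨Finset.mem_univ _, j, hij, h⟩
    · simp only [hT, Finset.mem_filter] at h ⊢
      obtain ⟨-, m, hjm, hzm⟩ := h
      exact ⟨Finset.mem_univ _, m, lt_trans hij hjm, hzm⟩
  have hA : (L j).card + (T j).card ≤ (T i).card := by
    calc (L j).card + (T j).card = (L j ∪ T j).card :=
          (Finset.card_union_of_disjoint hLjTj).symm
      _ ≤ (T i).card := Finset.card_le_card hsub
  -- pointwise bounds on win counts
  have hlowc : ∀ s ∈ L i, ((T i).card : ℝ) ≤ ((W s).card : ℝ) := by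
    intro s hs
    exact_mod_cast Finset.card_le_card (hlow s hs)
  have hupc : ∀ t ∈ L j, ((W t).card : ℝ) ≤ ((T i).card : ℝ) - 1 := by
    intro t ht
    have h1 : (W t).card ≤ ((L j).erase t).card + (T j).card :=
      le_trans (Finset.card_le_card (hup t ht)) (Finset.card_union_le _ _)
    have h2 : ((L j).erase t).card = (L j).card - 1 := Finset.card_erase_of_mem ht
    have h3 : 1 ≤ (L j).card := Finset.card_pos.mpr ⟨t, ht⟩
    have h4 : (W t).card + 1 ≤ (T i).card := by omega
    have : ((W t).card : ℝ) + 1 ≤ ((T i).card : ℝ) := by exact_mod_cast h4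
    linarith
  -- bounds on winRate
  have hlowR : ∀ s ∈ L i, c * ((T i).card : ℝ) ≤ winRate M s := by
    intro s hs
    rw [hWR]
    exact mul_le_mul_of_nonneg_left (hlowc s hs) (le_of_lt hc)
  have hupR : ∀ t ∈ L j, winRate M t ≤ c * (((T i).card : ℝ) - 1) := by
    intro t ht
    rw [hWR]
    exact mul_le_mul_of_nonneg_left (hupc t ht) (le_of_lt hc)
  -- averages
  have hi0 : (0:ℝ) < ((L i).card : ℝ) := by
    exact_mod_cast Finset.card_pos.mpr (hne i)
  have hj0 : (0:ℝ) < ((L j).card : ℝ) := by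
    exact_mod_cast Finset.card_pos.mpr (hne j)
  have hsumi : ((L i).card : ℝ) * (c * ((T i).card : ℝ)) ≤ ∑ s ∈ L i, winRate M s := by
    calc ((L i).card : ℝ) * (c * ((T i).card : ℝ))
        = ∑ _s ∈ L i, c * ((T i).card : ℝ) := by
          rw [Finset.sum_const, nsmul_eq_mul]
      _ ≤ ∑ s ∈ L i, winRate M s := Finset.sum_le_sum hlowR
  have hsumj : ∑ t ∈ L j, winRate M t ≤ ((L j).card : ℝ) * (c * (((T i).card : ℝ) - 1)) := by
    calc ∑ t ∈ L j, winRate M t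
        ≤ ∑ _t ∈ L j, c * (((T i).card : ℝ) - 1) := Finset.sum_le_sum hupR
      _ = ((L j).card : ℝ) * (c * (((T i).card : ℝ) - 1)) := by
          rw [Finset.sum_const, nsmul_eq_mul]
  have hLi : layerStrength M (L i) ≥ c * ((T i).card : ℝ) := by
    rw [layerStrength, one_div, inv_mul_eq_div, ge_iff_le, le_div_iff₀ hi0]
    linarith [hsumi]
  have hLj : layerStrength M (L j) ≤ c * (((T i).card : ℝ) - 1) := by
    rw [layerStrength, one_div, inv_mul_eq_div, div_le_iff₀ hj0]
    linarith [hsumj]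
  have : c * (((T i).card : ℝ) - 1) < c * ((T i).card : ℝ) := by
    have : ((T i).card : ℝ) - 1 < ((T i).card : ℝ) := by linarith
    exact mul_lt_mul_of_pos_left this hc
  linarith
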